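/- If A → B is a rank-preserving weak map of matroids, then for every chain C of flats of B there exists a chain D of flats of A with the same set of ranks (flag) such that applying the B-closure to each flat of D yields exactly the chain C. -/

import Mathlib

/-- The rank of a set `X` in a matroid `M`. -/
noncomputable def mrk {α : Type*} (M : Matroid α) (X : Set α) : ℕ :=
  sSup {n | ∃ I, M.Indep I ∧ I ⊆ X ∧ I.ncard = n}

/-- A chain of flats of `M` lying strictly between the minimal flat and the
ground set, totally ordered by inclusion. -/
def IsFlatChain {α : Type*} (M : Matroid α) (C : Set (Set α)) : Prop :=
  (∀ F ∈ C, M.IsFlat F ∧ F ≠ M.closure ∅ ∧ F ≠ M.E) ∧ IsChain (· ⊆ ·) C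

open Set

lemma closure_flat' {α : Type*} (M : Matroid α) (X : Set α) : M.IsFlat (M.closure X) := by
  rw [Matroid.closure_def, Set.sInter_eq_iInter]
  have hne : Nonempty ↥{F | M.IsFlat F ∧ X ∩ M.E ⊆ F} :=
    ⟨⟨M.E, ⟨M.ground_isFlat, Set.inter_subset_right⟩⟩⟩
  exact Matroid.IsFlat.iInter (fun F => F.2.1)

/-- If `J` is a basis of `X` in a finite matroid, then `mrk M X = J.ncard`. -/
lemma mrk_eq_of_basis {α : Type*} {M : Matroid α} [M.Finite] {J X : Set α}
    (hJ : M.IsBasis J X) : mrk M X = J.ncard := by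
  have hX : X ⊆ M.E := hJ.subset_ground
  have hub : ∀ n ∈ {n | ∃ I, M.Indep I ∧ I ⊆ X ∧ I.ncard = n}, n ≤ J.ncard := by
    rintro n ⟨I, hI, hIX, rfl⟩
    obtain ⟨J', hJ', hIJ'⟩ := hI.subset_isBasis_of_subset hIX hX
    have hJ'fin : J'.Finite := M.set_finite J' hJ'.indep.subset_ground
    have h1 : I.ncard ≤ J'.ncard := Set.ncard_le_ncard hIJ' hJ'fin
    have h2 : J'.ncard = J.ncard := by
      have := hJ'.encard_eq_encard hJ
      rw [Set.ncard_def, Set.ncard_def, this]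
    omega
  have hmem : J.ncard ∈ {n | ∃ I, M.Indep I ∧ I ⊆ X ∧ I.ncard = n} :=
    ⟨J, hJ.indep, hJ.subset, rfl⟩
  exact le_antisymm (csSup_le ⟨_, hmem⟩ hub) (le_csSup ⟨J.ncard, hub⟩ hmem)

/-- Nested bases along a finite chain of subsets of the ground set. -/
lemma nested_bases {α : Type*} (M : Matroid α) :
    ∀ n (C : Set (Set α)), C.Finite → C.ncard ≤ n → IsChain (· ⊆ ·) C →
      (∀ F ∈ C, F ⊆ M.E) →
      ∃ I : Set α → Set α, (∀ F ∈ C, M.IsBasis (I F) F) ∧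
        (∀ F ∈ C, ∀ F' ∈ C, F ⊆ F' → I F ⊆ I F') := by
  intro n
  induction n with
  | zero =>
    intro C hfin hcard _ _
    have hC0 : C = ∅ := (Set.ncard_eq_zero hfin).mp (Nat.le_zero.mp hcard)
    subst hC0
    exact ⟨fun _ => ∅, by simp, by simp⟩
  | succ n ih =>
    intro C hfin hcard hchain hsub
    rcases eq_empty_or_nonempty C with rfl | hne
    · exact ⟨fun _ => ∅, by simp, by simp⟩
    obtain ⟨Fmax, hFmaxC, hmax⟩ := Set.Finite.exists_maximalFor id C hfin hne
    have hmax' : ∀ F ∈ C, F ⊆ Fmax := by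
      intro F hF
      by_cases h : F = Fmax
      · exact h ▸ Subset.rfl
      · rcases hchain hF hFmaxC h with h' | h'
        · exact h'
        · exact hmax hF h'
    set C' := C \ {Fmax} with hC'
    have hC'fin : C'.Finite := hfin.diff
    have hC'card : C'.ncard ≤ n := by
      have h1 : C'.ncard = C.ncard - 1 := Set.ncard_diff_singleton_of_mem hFmaxC
      have h2 : 0 < C.ncard := (Set.ncard_pos hfin).mpr ⟨Fmax, hFmaxC⟩
      omega
    have hC'chain : IsChain (· ⊆ ·) C' := hchain.mono diff_subset
    have hC'sub : ∀ F ∈ C', F ⊆ M.E := fun F hF => hsub F hF.1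
    obtain ⟨I', hI'b, hI'mono⟩ := ih C' hC'fin hC'card hC'chain hC'sub
    -- find a common independent superset K of all the I' F, inside Fmax
    have hK : ∃ K, M.Indep K ∧ K ⊆ Fmax ∧ ∀ F ∈ C', I' F ⊆ K := by
      rcases eq_empty_or_nonempty C' with h0 | hne'
      · exact ⟨∅, M.empty_indep, empty_subset _, by simp [h0]⟩
      obtain ⟨F₁, hF₁, hmax₁⟩ := Set.Finite.exists_maximalFor id C' hC'fin hne'
      refine ⟨I' F₁, (hI'b F₁ hF₁).indep, (hI'b F₁ hF₁).subset.trans (hmax' F₁ hF₁.1), ?_⟩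
      intro F hF
      have hFF₁ : F ⊆ F₁ := by
        by_cases h : F = F₁
        · exact h ▸ Subset.rfl
        · rcases hC'chain hF hF₁ h with h' | h'
          · exact h'
          · exact hmax₁ hF h'
      exact hI'mono F hF F₁ hF₁ hFF₁
    obtain ⟨K, hKind, hKsub, hKcont⟩ := hK
    classical
    obtain ⟨J, hJ, hKJ⟩ := hKind.subset_isBasis_of_subset hKsub (hsub Fmax hFmaxC)
    refine ⟨fun F => if F = Fmax then J else I' F, ?_, ?_⟩
    · intro F hF
      by_cases h : F = Fmax
      · simpa [h] using hJ
      · simpa [h] using hI'b F ⟨hF, h⟩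
    · intro F hF F' hF' hFF'
      by_cases h' : F' = Fmax
      · by_cases h : F = Fmax
        · simp [h, h']
        · simp only [h, h', if_true, if_false]
          exact (hKcont F ⟨hF, h⟩).trans hKJ
      · have hFne : F ≠ Fmax := by
          rintro rfl
          exact h' (subset_antisymm (hmax' F' hF') hFF')
        simp only [h', hFne, if_false]
        exact hI'mono F ⟨hF, hFne⟩ F' ⟨hF', h'⟩ hFF'

/-- If `A → B` is a rank-preserving weak map of matroids, then
for every chain `C` of flats of `B` there exists a chain `D` of flats of `A`
with the same flag (set of ranks) such that applying the `B`-closure to each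
flat of `D` yields exactly `C`. -/
theorem stmt6 {α : Type*} (A B : Matroid α) [A.Finite] [B.Finite]
    (hE : A.E = B.E) (hweak : ∀ I : Set α, B.Indep I → A.Indep I)
    (hrk : mrk A A.E = mrk B B.E)
    (C : Set (Set α)) (hC : IsFlatChain B C) :
    ∃ D : Set (Set α), IsFlatChain A D ∧
      (fun F => mrk A F) '' D = (fun F => mrk B F) '' C ∧
      (fun F => B.closure F) '' D = C := by
  obtain ⟨hCflat, hCchain⟩ := hC
  have hCsub : ∀ F ∈ C, F ⊆ B.E := fun F hF => (hCflat F hF).1.subset_ground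
  have hCfin : C.Finite :=
    Set.Finite.subset (B.ground_finite.finite_subsets) (fun F hF => hCsub F hF)
  obtain ⟨I, hIb, hImono⟩ := nested_bases B C.ncard C hCfin le_rfl hCchain hCsub
  -- weak map closure comparison
  have hAclB : ∀ S : Set α, B.Indep S → A.closure S ⊆ B.closure S := by
    intro S hS x hx
    have hSA : A.Indep S := hweak S hS
    rcases hSA.mem_closure_iff.mp hx with hd | hxS
    · have hxE : insert x S ⊆ B.E := by rw [← hE]; exact hd.subset_ground
      have : ¬ A.Indep (insert x S) := hd.1
      have hBdep : B.Dep (insert x S) := ⟨fun h => this (hweak _ h), hxE⟩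
      exact hS.mem_closure_iff.mpr (Or.inl hBdep)
    · exact B.subset_closure S hS.subset_ground hxS
  -- per-element facts
  have hclB : ∀ F ∈ C, B.closure (A.closure (I F)) = F := by
    intro F hF
    have hIF := hIb F hF
    have h1 : B.closure (I F) = F := by
      rw [hIF.closure_eq_closure, (hCflat F hF).1.closure]
    apply subset_antisymm
    · calc B.closure (A.closure (I F)) ⊆ B.closure (B.closure (I F)) :=
            B.closure_subset_closure (hAclB _ hIF.indep)
        _ = F := by rw [B.closure_closure, h1]
    · calc F = B.closure (I F) := h1.symm
        _ ⊆ B.closure (A.closure (I F)) := B.closure_subset_closure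
            (A.subset_closure (I F) (by rw [hE]; exact hIF.indep.subset_ground))
  have hrkA : ∀ F ∈ C, mrk A (A.closure (I F)) = (I F).ncard := by
    intro F hF
    exact mrk_eq_of_basis ((hweak _ (hIb F hF).indep).isBasis_closure)
  have hrkB : ∀ F ∈ C, mrk B F = (I F).ncard := fun F hF => mrk_eq_of_basis (hIb F hF)
  have hIne : ∀ F ∈ C, (I F).Nonempty := by
    intro F hF
    rw [Set.nonempty_iff_ne_empty]
    rintro h0
    have hIF := hIb F hF
    have h1 : B.closure (I F) = F := by
      rw [hIF.closure_eq_closure, (hCflat F hF).1.closure]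
    exact (hCflat F hF).2.1 (by rw [← h1, h0])
  refine ⟨(fun F => A.closure (I F)) '' C, ⟨?_, ?_⟩, ?_, ?_⟩
  · rintro G ⟨F, hF, rfl⟩
    refine ⟨closure_flat' A _, ?_, ?_⟩
    · -- not the minimal flat
      obtain ⟨x, hx⟩ := hIne F hF
      intro h
      replace h : A.closure (I F) = A.closure ∅ := h
      have hxcl : x ∈ A.closure (I F) :=
        A.subset_closure (I F) (by rw [hE]; exact (hIb F hF).indep.subset_ground) hx
      rw [h] at hxcl
      have hxind : A.Indep {x} := (hweak _ (hIb F hF).indep).subset (by simpa using hx)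
      rcases A.empty_indep.mem_closure_iff.mp hxcl with hd | hxe
      · exact hd.1 (by simpa using hxind)
      · exact hxe
    · -- not the ground set
      intro h
      replace h : A.closure (I F) = A.E := h
      have h1 : mrk A A.E = (I F).ncard := by rw [← h]; exact hrkA F hF
      obtain ⟨J, hJ, hIJ⟩ :=
        (hIb F hF).indep.subset_isBasis_of_subset (hIb F hF).indep.subset_ground Subset.rfl
      have hJfin : J.Finite := B.set_finite J hJ.indep.subset_ground
      have hss : I F ⊂ J := by
        refine hIJ.ssubset_of_ne ?_
        rintro rfl
        have : B.closure (I F) = F := by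
          rw [(hIb F hF).closure_eq_closure, (hCflat F hF).1.closure]
        have h2 : B.closure (I F) = B.E := by
          rw [hJ.closure_eq_closure, B.closure_ground]
        exact (hCflat F hF).2.2 (by rw [← this, h2])
      have hlt : (I F).ncard < J.ncard := Set.ncard_lt_ncard hss hJfin
      have h2 : mrk B B.E = J.ncard := mrk_eq_of_basis hJ
      omega
  · -- chain
    rintro G1 ⟨F1, hF1, rfl⟩ G2 ⟨F2, hF2, rfl⟩ hne
    by_cases h : F1 = F2
    · exact absurd (by rw [h]) hne
    rcases hCchain hF1 hF2 h with h' | h'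
    · exact Or.inl (A.closure_subset_closure (hImono F1 hF1 F2 hF2 h'))
    · exact Or.inr (A.closure_subset_closure (hImono F2 hF2 F1 hF1 h'))
  · -- flag equality
    rw [Set.image_image]
    apply Set.image_congr
    intro F hF
    rw [hrkA F hF, hrkB F hF]
  · -- closure image
    rw [Set.image_image]
    have : ∀ F ∈ C, B.closure (A.closure (I F)) = id F := fun F hF => hclB F hF
    rw [Set.image_congr this, Set.image_id]
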